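/- arXiv:0808.1138 — 4 statements merged into one kernel-verified Lean document; each statement's English description precedes it below -/
import Mathlib

section
/- In a connected graph C, the block-cut tree is a tree: the bipartite graph whose node set is V(C) ∪ 𝔅(C) (vertices of C together with blocks of C), with an edge between a vertex v and a block B whenever v ∈ B, is connected and acyclic. -/
/-- A set `B` of vertices induces a 2-connected subgraph of `G`: it has at least
two vertices, the induced subgraph is connected, and it stays connected after
deleting any one vertex.  (A single edge with its two endpoints counts as
2-connected.) -/
def Is2ConnectedSet {V : Type} (G : SimpleGraph V) (B : Set V) : Prop :=
  2 ≤ B.ncard ∧ (G.induce B).Connected ∧ ∀ v ∈ B, (G.induce (B \ {v})).Connected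

/-- A block of `G` is a maximal 2-connected induced subgraph. -/
def IsBlock {V : Type} (G : SimpleGraph V) (B : Set V) : Prop :=
  Is2ConnectedSet G B ∧ ∀ B' : Set V, B ⊆ B' → Is2ConnectedSet G B' → B' = B

namespace BlockCutAux

open SimpleGraph

variable {V : Type}

/-- The block-cut graph. -/
def BCT (G : SimpleGraph V) : SimpleGraph (V ⊕ {B : Set V // IsBlock G B}) :=
  SimpleGraph.fromRel
    (fun a b : V ⊕ {B : Set V // IsBlock G B} =>
      ∃ (v : V) (B : {B : Set V // IsBlock G B}),
        a = Sum.inl v ∧ b = Sum.inr B ∧ v ∈ B.1)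

lemma bct_adj {G : SimpleGraph V} {v : V} {B : {B : Set V // IsBlock G B}} :
    (BCT G).Adj (Sum.inl v) (Sum.inr B) ↔ v ∈ B.1 := by
  simp only [BCT, fromRel_adj, ne_eq]
  constructor
  · rintro ⟨-, (⟨v', B', hv, hB, hmem⟩ | ⟨v', B', hv, hB, hmem⟩)⟩
    · cases hv; cases hB; exact hmem
    · cases hB
  · intro h
    exact ⟨by simp, Or.inl ⟨v, B, rfl, rfl, h⟩⟩

lemma bct_not_adj_ll {G : SimpleGraph V} {u v : V} :
    ¬ (BCT G).Adj (Sum.inl u) (Sum.inl v) := by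
  rintro ⟨-, (⟨v', B', hv, hB, -⟩ | ⟨v', B', hv, hB, -⟩)⟩ <;> cases hB

lemma bct_not_adj_rr {G : SimpleGraph V} {A B : {B : Set V // IsBlock G B}} :
    ¬ (BCT G).Adj (Sum.inr A) (Sum.inr B) := by
  rintro ⟨-, (⟨v', B', hv, hB, -⟩ | ⟨v', B', hv, hB, -⟩)⟩ <;> cases hv

lemma induce_conn_of_subsingleton (G : SimpleGraph V) {s : Set V}
    (h1 : s.Nonempty) (h2 : s.Subsingleton) : (G.induce s).Connected := by
  obtain ⟨x, hx⟩ := h1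
  refine (connected_iff _).mpr ⟨fun a b => ?_, ⟨⟨x, hx⟩⟩⟩
  have : a = b := Subtype.ext (h2 a.2 b.2)
  exact this ▸ Reachable.refl a

lemma diff_connected {G : SimpleGraph V} {B : Set V} (hB : Is2ConnectedSet G B) (u : V) :
    (G.induce (B \ {u})).Connected := by
  by_cases hu : u ∈ B
  · exact hB.2.2 u hu
  · rw [Set.diff_singleton_eq_self hu]; exact hB.2.1

lemma diff_nonempty [Fintype V] {B : Set V} (hB : 2 ≤ B.ncard) (u : V) :
    (B \ {u}).Nonempty := by
  obtain ⟨a, ha, b, hb, hab⟩ := (Set.one_lt_ncard (Set.toFinite B)).mp (by omega)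
  by_cases hau : a = u
  · exact ⟨b, hb, by simp [← hau, Ne.symm hab]⟩
  · exact ⟨a, ha, by simp [hau]⟩

lemma pair_is2conn {G : SimpleGraph V} {x y : V} (h : G.Adj x y) :
    Is2ConnectedSet G {x, y} := by
  refine ⟨by rw [Set.ncard_pair h.ne], induce_pair_connected_of_adj h, ?_⟩
  intro v hv
  apply induce_conn_of_subsingleton
  · rcases hv with rfl | rfl
    · exact ⟨y, by simp [Ne.symm h.ne]⟩
    · exact ⟨x, by simp [h.ne]⟩
  · rcases hv with rfl | rfl
    · intro a ha b hb
      have ha' : a = y := by rcases ha with ⟨rfl | rfl, h2⟩ <;> simp_all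
      have hb' : b = y := by rcases hb with ⟨rfl | rfl, h2⟩ <;> simp_all
      rw [ha', hb']
    · intro a ha b hb
      have ha' : a = x := by rcases ha with ⟨rfl | rfl, h2⟩ <;> simp_all
      have hb' : b = x := by rcases hb with ⟨rfl | rfl, h2⟩ <;> simp_all
      rw [ha', hb']

/-- Every edge of `G` lies in some block. -/
lemma exists_block [Fintype V] {G : SimpleGraph V} {x y : V} (h : G.Adj x y) :
    ∃ B : Set V, IsBlock G B ∧ x ∈ B ∧ y ∈ B := by
  classical
  set S : Set (Set V) := {B | x ∈ B ∧ y ∈ B ∧ Is2ConnectedSet G B} with hS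
  have hfin : S.Finite := Set.toFinite _
  have hne : S.Nonempty := ⟨{x, y}, by simp, by simp, pair_is2conn h⟩
  obtain ⟨B, hBS, hmax⟩ := Set.Finite.exists_maximalFor Set.ncard S hfin hne
  refine ⟨B, ⟨hBS.2.2, ?_⟩, hBS.1, hBS.2.1⟩
  intro B' hsub h2c
  have hB'S : B' ∈ S := ⟨hsub hBS.1, hsub hBS.2.1, h2c⟩
  have hle : B.ncard ≤ B'.ncard := Set.ncard_le_ncard hsub (Set.toFinite _)
  exact (Set.eq_of_subset_of_ncard_le hsub (hmax hB'S hle)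
    (Set.toFinite _)).symm

/-- The chain lemma: along a path in the block-cut graph between two blocks, the
union of all blocks visited is connected, remains connected after deleting any
vertex not appearing on the path, and splits into (at most) two connected
pieces containing the two end blocks after deleting any vertex. -/
lemma chain (G : SimpleGraph V) :
    ∀ (n : ℕ) (Bb Bb' : {B : Set V // IsBlock G B})
      (q : (BCT G).Walk (Sum.inr Bb) (Sum.inr Bb')),
      q.length ≤ n → q.support.Nodup →
      ∃ U : Set V, Bb.1 ⊆ U ∧ Bb'.1 ⊆ U ∧ (G.induce U).Connected ∧
        (∀ u : V, Sum.inl u ∉ q.support → (G.induce (U \ {u})).Connected) ∧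
        (∀ u : V, ∃ S T : Set V, Bb.1 \ {u} ⊆ S ∧ Bb'.1 \ {u} ⊆ T ∧
          S ∪ T = U \ {u} ∧ (G.induce S).Connected ∧ (G.induce T).Connected) := by
  intro n
  induction n with
  | zero =>
    intro Bb Bb' q hlen hnd
    cases q with
    | nil =>
      refine ⟨Bb.1, subset_rfl, subset_rfl, Bb.2.1.2.1, ?_, ?_⟩
      · intro u _
        exact diff_connected Bb.2.1 u
      · intro u
        exact ⟨Bb.1 \ {u}, Bb.1 \ {u}, subset_rfl, subset_rfl, Set.union_self _,
          diff_connected Bb.2.1 u, diff_connected Bb.2.1 u⟩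
    | cons h q' => simp [SimpleGraph.Walk.length_cons] at hlen
  | succ n ih =>
    intro Bb Bb' q hlen hnd
    cases q with
    | nil =>
      refine ⟨Bb.1, subset_rfl, subset_rfl, Bb.2.1.2.1, ?_, ?_⟩
      · intro u _
        exact diff_connected Bb.2.1 u
      · intro u
        exact ⟨Bb.1 \ {u}, Bb.1 \ {u}, subset_rfl, subset_rfl, Set.union_self _,
          diff_connected Bb.2.1 u, diff_connected Bb.2.1 u⟩
    | @cons _ c _ h₁ q' =>
      cases c with
      | inr B => exact absurd h₁ bct_not_adj_rr
      | inl v =>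
        cases q' with
        | @cons _ c₂ _ h₂ q'' =>
          cases c₂ with
          | inl v₂ => exact absurd h₂ bct_not_adj_ll
          | inr B'' =>
            -- memberships
            have hvBb : v ∈ Bb.1 := bct_adj.mp h₁.symm
            have hvB'' : v ∈ B''.1 := bct_adj.mp h₂
            -- nodup facts
            simp only [Walk.support_cons, List.nodup_cons, List.mem_cons, not_or] at hnd
            have hq''nd : q''.support.Nodup := hnd.2.2
            have hvq'' : Sum.inl v ∉ q''.support := hnd.2.1
            have hlen'' : q''.length ≤ n := by
              simp only [Walk.length_cons] at hlen; omega
            obtain ⟨U'', hB''U, hB'U, hUconn, hUe, hUf⟩ := ih B'' Bb' q'' hlen'' hq''nd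
            refine ⟨Bb.1 ∪ U'', Set.subset_union_left, hB'U.trans Set.subset_union_right,
              ?_, ?_, ?_⟩
            · exact induce_union_connected Bb.2.1.2.1.preconnected hUconn.preconnected ⟨v, hvBb, hB''U hvB''⟩
            · intro u hu
              simp only [Walk.support_cons, List.mem_cons] at hu
              push_neg at hu
              have huv : u ≠ v := fun h => hu.2.1 (by rw [h])
              have huq'' : Sum.inl u ∉ q''.support := hu.2.2
              rw [Set.union_diff_distrib]
              exact induce_union_connected (diff_connected Bb.2.1 u).preconnected (hUe u huq'').preconnected
                ⟨v, ⟨hvBb, huv.symm⟩, ⟨hB''U hvB'', huv.symm⟩⟩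
            · intro u
              by_cases huv : u = v
              · subst huv
                refine ⟨Bb.1 \ {u}, U'' \ {u}, subset_rfl,
                  Set.diff_subset_diff_left hB'U, (Set.union_diff_distrib).symm,
                  diff_connected Bb.2.1 u, hUe u hvq''⟩
              · obtain ⟨S'', T'', hS1, hT1, hST, hSc, hTc⟩ := hUf u
                refine ⟨(Bb.1 \ {u}) ∪ S'', T'', Set.subset_union_left, hT1, ?_, ?_, hTc⟩
                · rw [Set.union_assoc, hST, ← Set.union_diff_distrib]
                · refine induce_union_connected (diff_connected Bb.2.1 u).preconnected hSc.preconnected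
                    ⟨v, ⟨hvBb, Ne.symm huv⟩, hS1 ⟨hvB'', Ne.symm huv⟩⟩

end BlockCutAux

open BlockCutAux SimpleGraph in
/-- The block-cut tree of a (finite) connected graph is a tree: the bipartite
graph on `V(C) ⊕ 𝔅(C)` with an edge between a vertex `v` and a block `B`
whenever `v ∈ B` is connected and acyclic. -/
theorem blockCutTree_isTree {V : Type} [Fintype V] [Nonempty V]
    (G : SimpleGraph V) (hG : G.Connected) :
    (SimpleGraph.fromRel
      (fun a b : V ⊕ {B : Set V // IsBlock G B} =>
        ∃ (v : V) (B : {B : Set V // IsBlock G B}),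
          a = Sum.inl v ∧ b = Sum.inr B ∧ v ∈ B.1)).IsTree := by
  classical
  show (BCT G).IsTree
  have key : ∀ {u v : V}, G.Walk u v → (BCT G).Reachable (Sum.inl u) (Sum.inl v) := by
    intro u v p
    induction p with
    | nil => exact Reachable.refl _
    | @cons a b c hab p ih =>
      obtain ⟨B, hB, haB, hbB⟩ := exists_block hab
      have h1 : (BCT G).Adj (Sum.inl a) (Sum.inr ⟨B, hB⟩) := bct_adj.mpr haB
      have h2 : (BCT G).Adj (Sum.inl b) (Sum.inr ⟨B, hB⟩) := bct_adj.mpr hbB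
      exact (h1.reachable.trans h2.reachable.symm).trans ih
  have reachBlock : ∀ (B : {B : Set V // IsBlock G B}), ∃ v : V,
      (BCT G).Adj (Sum.inl v) (Sum.inr B) := by
    intro B
    obtain ⟨x, hx, -⟩ := diff_nonempty B.2.1.1 (Classical.arbitrary V)
    exact ⟨x, bct_adj.mpr hx⟩
  constructor
  · -- Connected
    refine (connected_iff _).mpr ⟨fun a b => ?_, ⟨Sum.inl (Classical.arbitrary V)⟩⟩
    have core : ∀ (u v : V), (BCT G).Reachable (Sum.inl u) (Sum.inl v) := by
      intro u v
      exact key (hG.preconnected u v).some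
    cases a with
    | inl u =>
      cases b with
      | inl v => exact core u v
      | inr B =>
        obtain ⟨x, hx⟩ := reachBlock B
        exact (core u x).trans hx.reachable
    | inr A =>
      obtain ⟨x, hx⟩ := reachBlock A
      cases b with
      | inl v => exact hx.reachable.symm.trans (core x v)
      | inr B =>
        obtain ⟨y, hy⟩ := reachBlock B
        exact hx.reachable.symm.trans ((core x y).trans hy.reachable)
  · -- Acyclic
    have main : ∀ (w : V) (B₀ : {B : Set V // IsBlock G B}),
        (BCT G).Adj (Sum.inl w) (Sum.inr B₀) →
        (BCT G).IsBridge s(Sum.inl w, Sum.inr B₀) := by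
      intro w B₀ hadj
      rw [isBridge_iff_forall_walk_mem_edges]
      intro p0
      by_contra hep0
      obtain ⟨p, hp, hep⟩ : ∃ p : (BCT G).Walk (Sum.inl w) (Sum.inr B₀),
          p.IsPath ∧ s(Sum.inl w, Sum.inr B₀) ∉ p.edges :=
        ⟨p0.toPath.1, p0.toPath.2, fun h => hep0 (Walk.edges_toPath_subset p0 h)⟩
      have hwB₀ : w ∈ B₀.1 := bct_adj.mp hadj
      cases p with
      | @cons _ c _ h₁ q =>
        cases c with
        | inl v => exact absurd h₁ bct_not_adj_ll
        | inr B₁ =>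
          have hwB₁ : w ∈ B₁.1 := bct_adj.mp h₁
          have hne : B₁ ≠ B₀ := by
            rintro rfl
            exact hep (by simp [Walk.edges_cons])
          rw [Walk.cons_isPath_iff] at hp
          obtain ⟨hqpath, hwq⟩ := hp
          obtain ⟨U, hB₁U, hB₀U, hUconn, hUe, hUf⟩ :=
            chain G q.length B₁ B₀ q le_rfl hqpath.support_nodup
          have hU2 : Is2ConnectedSet G U := by
            refine ⟨le_trans B₁.2.1.1 (Set.ncard_le_ncard hB₁U (Set.toFinite _)), hUconn, ?_⟩
            intro u _
            by_cases huw : u = w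
            · subst huw
              exact hUe u hwq
            · obtain ⟨S, T, hS1, hT1, hST, hSc, hTc⟩ := hUf u
              rw [← hST]
              exact induce_union_connected hSc.preconnected hTc.preconnected
                ⟨w, hS1 ⟨hwB₁, Ne.symm huw⟩, hT1 ⟨hwB₀, Ne.symm huw⟩⟩
          have hUB₁ : U = B₁.1 := B₁.2.2 U hB₁U hU2
          have : B₁.1 = B₀.1 := B₀.2.2 B₁.1 (hUB₁ ▸ hB₀U) B₁.2.1
          exact hne (Subtype.ext this)
    rw [isAcyclic_iff_forall_edge_isBridge]
    intro e he
    induction e with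
    | h a b =>
      rw [mem_edgeSet] at he
      cases a with
      | inl u =>
        cases b with
        | inl v => exact absurd he bct_not_adj_ll
        | inr B => exact main u B he
      | inr A =>
        cases b with
        | inl v =>
          rw [Sym2.eq_swap]
          exact main v A he.symm
        | inr B => exact absurd he bct_not_adj_rr
end

section
/- Let η₁, η₂ be formal power series defined from β₁, β₂ by η₁ = β₁/(1 − β₁ − 2β₂) and η₂ = β₂/(1 − β₂ − 2β₁) (well-defined since β₁, β₂ have zero constant term). Then conversely β₁ = η₁(1 − η₂)/(1 + η₁ + η₂ − 3η₁η₂) and β₂ = η₂(1 − η₁)/(1 + η₁ + η₂ − 3η₁η₂). -/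
open MvPowerSeries

/-- Let `β₁, β₂` be formal power series with zero constant term and define
`η₁ = β₁/(1 − β₁ − 2β₂)`, `η₂ = β₂/(1 − β₂ − 2β₁)` (the denominators having
constant term 1, hence being invertible).  Then conversely
`β₁ = η₁(1 − η₂)/(1 + η₁ + η₂ − 3η₁η₂)` and
`β₂ = η₂(1 − η₁)/(1 + η₁ + η₂ − 3η₁η₂)` (the denominator again being
invertible with constant term 1). -/
theorem beta_eta_inversion {σ : Type} (β₁ β₂ η₁ η₂ : MvPowerSeries σ ℚ)
    (hβ₁ : MvPowerSeries.constantCoeff β₁ = 0)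
    (hβ₂ : MvPowerSeries.constantCoeff β₂ = 0)
    (hη₁ : η₁ * (1 - β₁ - 2 * β₂) = β₁)
    (hη₂ : η₂ * (1 - β₂ - 2 * β₁) = β₂) :
    β₁ * (1 + η₁ + η₂ - 3 * η₁ * η₂) = η₁ * (1 - η₂) ∧
    β₂ * (1 + η₁ + η₂ - 3 * η₁ * η₂) = η₂ * (1 - η₁) := by
  constructor
  · linear_combination -(1 + η₂) * hη₁ + 2 * η₁ * hη₂
  · linear_combination -(1 + η₁) * hη₂ + 2 * η₂ * hη₁
end

section
/- Suppose η₁, η₂ are formal power series in x, t with zero constant term satisfying η₁ = x t² (1 − η₂)^{−2} and η₂ = t² (1 − η₁)^{−2}. Define β₁ = η₁(1 − η₂)/(1 + η₁ + η₂ − 3η₁η₂), β₂ = η₂(1 − η₁)/(1 + η₁ + η₂ − 3η₁η₂), and s by t = s·(1 + M) where M = (1 − 2β₁ − 2β₂)/((1 − β₁ − 2β₂)(1 − β₂ − 2β₁)) − 1. Then β₁ = x s² + β₁² + 2β₁β₂ and β₂ = s² + β₂² + 2β₁β₂. -/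
open PowerSeries

/-- Compatibility of the parametrizations `(β₁, β₂)` and `(η₁, η₂)` used for
rooted maps and rooted 2-connected maps.  We work in `ℚ[x][[t]]`, with `t` the
power series variable `X` and `x = Polynomial.X`.  Suppose `η₁, η₂` have zero
constant term and satisfy `η₁ = x t² (1 − η₂)⁻²`, `η₂ = t² (1 − η₁)⁻²`.  Define
`β₁ = η₁(1 − η₂)/(1 + η₁ + η₂ − 3η₁η₂)`,
`β₂ = η₂(1 − η₁)/(1 + η₁ + η₂ − 3η₁η₂)`, let
`1 + M = (1 − 2β₁ − 2β₂)/((1 − β₁ − 2β₂)(1 − β₂ − 2β₁))`, and define `s` by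
`t = s(1 + M)`.  Then `β₁ = x s² + β₁² + 2β₁β₂` and `β₂ = s² + β₂² + 2β₁β₂`. -/
theorem beta_system_from_eta_system
    (η₁ η₂ β₁ β₂ M s : PowerSeries (Polynomial ℚ))
    (hη₁0 : PowerSeries.constantCoeff η₁ = 0)
    (hη₂0 : PowerSeries.constantCoeff η₂ = 0)
    (hη₁ : η₁ * (1 - η₂) ^ 2 =
      PowerSeries.C Polynomial.X * PowerSeries.X ^ 2)
    (hη₂ : η₂ * (1 - η₁) ^ 2 = PowerSeries.X ^ 2)
    (hβ₁ : β₁ * (1 + η₁ + η₂ - 3 * η₁ * η₂) = η₁ * (1 - η₂))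
    (hβ₂ : β₂ * (1 + η₁ + η₂ - 3 * η₁ * η₂) = η₂ * (1 - η₁))
    (hM : (1 + M) * ((1 - β₁ - 2 * β₂) * (1 - β₂ - 2 * β₁))
            = 1 - 2 * β₁ - 2 * β₂)
    (hs : PowerSeries.X = s * (1 + M)) :
    β₁ = PowerSeries.C Polynomial.X * s ^ 2 + β₁ ^ 2 + 2 * β₁ * β₂ ∧
    β₂ = s ^ 2 + β₂ ^ 2 + 2 * β₁ * β₂ := by
  have hDunit : IsUnit (1 + η₁ + η₂ - 3 * η₁ * η₂) := by
    rw [PowerSeries.isUnit_iff_constantCoeff]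
    simp [hη₁0, hη₂0]
  -- (1-β₁-2β₂) * D = 1 - η₂
  have h1 : (1 - β₁ - 2 * β₂) * (1 + η₁ + η₂ - 3 * η₁ * η₂) = 1 - η₂ := by
    linear_combination (-1 : PowerSeries (Polynomial ℚ)) * hβ₁ - 2 * hβ₂
  have h2 : (1 - β₂ - 2 * β₁) * (1 + η₁ + η₂ - 3 * η₁ * η₂) = 1 - η₁ := by
    linear_combination (-2 : PowerSeries (Polynomial ℚ)) * hβ₁ - hβ₂
  have hB : (1 - 2 * β₁ - 2 * β₂) * (1 + η₁ + η₂ - 3 * η₁ * η₂)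
      = (1 - η₁) * (1 - η₂) := by
    linear_combination (-2 : PowerSeries (Polynomial ℚ)) * hβ₁ - 2 * hβ₂
  have hE : IsUnit ((1 - η₁) * (1 - η₂)) := by
    rw [PowerSeries.isUnit_iff_constantCoeff]
    simp [hη₁0, hη₂0]
  have hMD : 1 + M = 1 + η₁ + η₂ - 3 * η₁ * η₂ := by
    apply hE.mul_right_cancel
    calc (1 + M) * ((1 - η₁) * (1 - η₂))
        = ((1 + M) * ((1 - β₁ - 2 * β₂) * (1 - β₂ - 2 * β₁)))
            * (1 + η₁ + η₂ - 3 * η₁ * η₂) ^ 2 := by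
          rw [← h1, ← h2]; ring
      _ = (1 - 2 * β₁ - 2 * β₂) * (1 + η₁ + η₂ - 3 * η₁ * η₂)
            * (1 + η₁ + η₂ - 3 * η₁ * η₂) := by rw [hM]; ring
      _ = (1 + η₁ + η₂ - 3 * η₁ * η₂) * ((1 - η₁) * (1 - η₂)) := by rw [hB]; ring
  have hsD : PowerSeries.X = s * (1 + η₁ + η₂ - 3 * η₁ * η₂) := by rw [hs, hMD]
  have hX2 : PowerSeries.X ^ 2 = s ^ 2 * (1 + η₁ + η₂ - 3 * η₁ * η₂) ^ 2 := by
    rw [hsD]; ring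
  have hD2 : IsUnit ((1 + η₁ + η₂ - 3 * η₁ * η₂) ^ 2) := hDunit.pow 2
  constructor
  · apply hD2.mul_right_cancel
    linear_combination
      ((1 + η₁ + η₂ - 3 * η₁ * η₂) - β₁ * (1 + η₁ + η₂ - 3 * η₁ * η₂)
        - η₁ * (1 - η₂) - 2 * η₂ * (1 - η₁)) * hβ₁
      - 2 * β₁ * (1 + η₁ + η₂ - 3 * η₁ * η₂) * hβ₂
      + hη₁ + PowerSeries.C Polynomial.X * hX2
  · apply hD2.mul_right_cancel
    linear_combination
      ((1 + η₁ + η₂ - 3 * η₁ * η₂) - β₂ * (1 + η₁ + η₂ - 3 * η₁ * η₂)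
        - η₂ * (1 - η₁) - 2 * η₁ * (1 - η₂)) * hβ₂
      - 2 * β₂ * (1 + η₁ + η₂ - 3 * η₁ * η₂) * hβ₁
      + hη₂ + hX2
end

section
/- Suppose γ₁, γ₂ are formal power series in x, w with zero constant term satisfying γ₁ = x w (1 + γ₂)² and γ₂ = w (1 + γ₁)². Set η₁ = γ₁/(1 + γ₁ + γ₂) and η₂ = γ₂/(1 + γ₁ + γ₂), and define y = η₂(1 − η₁)² ∈ ℚ[x][[w]]. Then w = η₂(1 − η₁ − η₂)/(1 − η₂)², x w = η₁(1 − η₁ − η₂)/(1 − η₁)², and y = γ₁γ₂/(x w (1 + γ₁ + γ₂)³) (the last identity holds after multiplying through by x w). -/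
open PowerSeries

/-- Algebraic manipulations connecting the parametrizations used for counting
rooted 2-connected versus rooted 3-connected planar maps.  We work in
`ℚ[x][[w]]`, with `w` the power series variable `X` and `x = Polynomial.X`.
Suppose `γ₁, γ₂` have zero constant term and satisfy `γ₁ = x w (1 + γ₂)²`,
`γ₂ = w (1 + γ₁)²`.  Set `η₁ = γ₁/(1 + γ₁ + γ₂)`, `η₂ = γ₂/(1 + γ₁ + γ₂)` and
define `y = η₂(1 − η₁)²`.  Then `w = η₂(1 − η₁ − η₂)/(1 − η₂)²`,
`x w = η₁(1 − η₁ − η₂)/(1 − η₁)²`, and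
`y = γ₁γ₂/(x w (1 + γ₁ + γ₂)³)` (the last identity after multiplying through
by `x w`). -/
theorem gamma_eta_y_identities
    (γ₁ γ₂ η₁ η₂ y : PowerSeries (Polynomial ℚ))
    (hγ₁0 : PowerSeries.constantCoeff γ₁ = 0)
    (hγ₂0 : PowerSeries.constantCoeff γ₂ = 0)
    (hγ₁ : γ₁ = PowerSeries.C Polynomial.X * PowerSeries.X * (1 + γ₂) ^ 2)
    (hγ₂ : γ₂ = PowerSeries.X * (1 + γ₁) ^ 2)
    (hη₁ : η₁ * (1 + γ₁ + γ₂) = γ₁)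
    (hη₂ : η₂ * (1 + γ₁ + γ₂) = γ₂)
    (hy : y = η₂ * (1 - η₁) ^ 2) :
    PowerSeries.X * (1 - η₂) ^ 2 = η₂ * (1 - η₁ - η₂) ∧
    PowerSeries.C Polynomial.X * PowerSeries.X * (1 - η₁) ^ 2
        = η₁ * (1 - η₁ - η₂) ∧
    y * (PowerSeries.C Polynomial.X * PowerSeries.X * (1 + γ₁ + γ₂) ^ 3)
        = γ₁ * γ₂ := by

  set D := 1 + γ₁ + γ₂ with hD
  have hD0 : PowerSeries.constantCoeff D = 1 := by
    simp [hD, hγ₁0, hγ₂0]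
  have hDne : D ≠ 0 := by
    intro h; rw [h] at hD0; simp at hD0
  have e1 : (1 - η₁) * D = 1 + γ₂ := by
    rw [sub_mul, one_mul, hη₁, hD]; ring
  have e2 : (1 - η₂) * D = 1 + γ₁ := by
    rw [sub_mul, one_mul, hη₂, hD]; ring
  have e3 : (1 - η₁ - η₂) * D = 1 := by
    rw [sub_mul, sub_mul, one_mul, hη₁, hη₂, hD]; ring
  refine ⟨mul_right_cancel₀ (pow_ne_zero 2 hDne) ?_,
         mul_right_cancel₀ (pow_ne_zero 2 hDne) ?_, ?_⟩
  · calc PowerSeries.X * (1 - η₂) ^ 2 * D ^ 2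
        = PowerSeries.X * ((1 - η₂) * D) ^ 2 := by ring
      _ = PowerSeries.X * (1 + γ₁) ^ 2 := by rw [e2]
      _ = γ₂ := hγ₂.symm
      _ = (η₂ * D) * ((1 - η₁ - η₂) * D) := by rw [hη₂, e3, mul_one]
      _ = η₂ * (1 - η₁ - η₂) * D ^ 2 := by ring
  · calc PowerSeries.C Polynomial.X * PowerSeries.X * (1 - η₁) ^ 2 * D ^ 2
        = PowerSeries.C Polynomial.X * PowerSeries.X * ((1 - η₁) * D) ^ 2 := by ring
      _ = PowerSeries.C Polynomial.X * PowerSeries.X * (1 + γ₂) ^ 2 := by rw [e1]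
      _ = γ₁ := hγ₁.symm
      _ = (η₁ * D) * ((1 - η₁ - η₂) * D) := by rw [hη₁, e3, mul_one]
      _ = η₁ * (1 - η₁ - η₂) * D ^ 2 := by ring
  · calc y * (PowerSeries.C Polynomial.X * PowerSeries.X * D ^ 3)
        = (η₂ * D) * ((1 - η₁) * D) ^ 2
            * (PowerSeries.C Polynomial.X * PowerSeries.X) := by rw [hy]; ring
      _ = γ₂ * (PowerSeries.C Polynomial.X * PowerSeries.X * (1 + γ₂) ^ 2) := by
            rw [e1, hη₂]; ring
      _ = γ₂ * γ₁ := by rw [← hγ₁]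
      _ = γ₁ * γ₂ := mul_comm _ _
end
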